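/- Let L be a finitely generated group and R a normal subgroup of L such that every homomorphism from the quotient H = L/R to a finite group is trivial and the second integral group homology H₂(H, ℤ) vanishes. Then for every subgroup U of R that is normal in L and of finite index in R, there exists a finite-index subgroup V of L with V ∩ R ≤ U. -/

import Mathlib

/-- The kernel of the canonical presentation `FreeGroup G → G`. -/
def presentationKernel (G : Type*) [Group G] : Subgroup (FreeGroup G) :=
  (FreeGroup.lift (id : G → G)).ker

/-- Numerator `R ⊓ [F, F]` of Hopf's formula. -/
def hopfNumerator (G : Type*) [Group G] : Subgroup (FreeGroup G) :=
  presentationKernel G ⊓ commutator (FreeGroup G)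

/-- Denominator `[F, R]` of Hopf's formula. -/
def hopfDenominator (G : Type*) [Group G] : Subgroup (FreeGroup G) :=
  ⁅(⊤ : Subgroup (FreeGroup G)), presentationKernel G⁆

instance (G : Type*) [Group G] : (presentationKernel G).Normal := by
  unfold presentationKernel; infer_instance

instance (G : Type*) [Group G] : (hopfDenominator G).Normal := by
  unfold hopfDenominator; infer_instance

/-- The second integral homology `H₂(G, ℤ)` (Schur multiplier), via Hopf's formula
`H₂(G) = (R ∩ [F, F]) / [F, R]` for the canonical presentation `1 → R → F → G → 1`. -/
def schurMultiplier (G : Type*) [Group G] : Type _ :=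
  hopfNumerator G ⧸ (hopfDenominator G).subgroupOf (hopfNumerator G)

instance (G : Type*) [Group G] : Group (schurMultiplier G) := by
  unfold schurMultiplier; infer_instance

/-- The fiber product `L ×_{L/N} L = {(x, y) | x⁻¹ * y ∈ N}` as a subgroup of `L × L`. -/
def fiberProduct {L : Type*} [Group L] (N : Subgroup L) [N.Normal] : Subgroup (L × L) where
  carrier := {p | p.1⁻¹ * p.2 ∈ N}
  one_mem' := by simpa using N.one_mem
  mul_mem' := by
    intro a b ha hb
    simp only [Set.mem_setOf_eq, ← QuotientGroup.eq] at *
    simp only [Prod.fst_mul, Prod.snd_mul, QuotientGroup.mk_mul, ha, hb]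
  inv_mem' := by
    intro a ha
    simp only [Set.mem_setOf_eq, ← QuotientGroup.eq] at *
    simp only [Prod.fst_inv, Prod.snd_inv, QuotientGroup.mk_inv, ha]


open scoped commutatorElement

-- commutator correction lemma
lemma commutatorElement_mul_aux {G : Type} [Group G] (c d z z' : G)
    (h1 : Commute z d) (h2 : Commute z z') (h3 : Commute z' c) :
    ⁅c*z, d*z'⁆ = ⁅c, d⁆ := by
  have key : (c*z)*(d*z')*(c*z)⁻¹ = c*((d*z')*c⁻¹) := by
    have h : z*(d*z') = (d*z')*z := (h1.mul_right h2).eq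
    calc (c*z)*(d*z')*(c*z)⁻¹ = c*(z*(d*z')*z⁻¹)*c⁻¹ := by
          simp [mul_assoc]
      _ = c*((d*z')*c⁻¹) := by rw [h]; simp [mul_assoc]
  calc ⁅c*z, d*z'⁆ = ((c*z)*(d*z')*(c*z)⁻¹)*(d*z')⁻¹ := by
        rw [commutatorElement_def]
    _ = c*((d*z')*c⁻¹)*(d*z')⁻¹ := by rw [key]
    _ = ⁅c, d⁆ := by
        have h3' : z'*c⁻¹ = c⁻¹*z' := h3.inv_right.eq
        rw [commutatorElement_def, mul_inv_rev, mul_assoc d z', h3']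
        simp [mul_assoc]


lemma subsingleton_of_fg_comm {G : Type} [CommGroup G] (hfg : Group.FG G)
    (hq : ∀ (F : Type) [Group F] [Finite F] (f : G →* F), f = 1) : Subsingleton G := by
  by_contra hns
  have hnt : Nontrivial G := not_subsingleton_iff_nontrivial.mp hns
  obtain ⟨S, hScl, hSfin⟩ := Group.fg_iff.mp hfg
  -- find a maximal proper subgroup
  obtain ⟨M, -, hM⟩ := zorn_le_nonempty₀ {K : Subgroup G | K ≠ ⊤}
    (fun c hcs hc y hy => by
      refine ⟨sSup c, ?_, fun z hz => le_sSup hz⟩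
      intro htop
      have hmem : ∀ x ∈ S, x ∈ ⋃ K ∈ c, (K : Set G) := by
        intro x hx
        have : x ∈ sSup c := htop ▸ Subgroup.mem_top x
        obtain ⟨K, hK, hxK⟩ := (Subgroup.mem_sSup_of_directedOn ⟨y, hy⟩ hc.directedOn).mp this
        exact Set.mem_biUnion hK hxK
      have hdir : DirectedOn (fun (i j : Subgroup G) => (i : Set G) ⊆ (j : Set G)) c :=
        fun a ha b hb => by
          obtain ⟨k, hk, hak, hbk⟩ := hc.directedOn a ha b hb
          exact ⟨k, hk, SetLike.coe_subset_coe.mpr hak, SetLike.coe_subset_coe.mpr hbk⟩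
      obtain ⟨K, hKc, hSK⟩ := DirectedOn.exists_mem_subset_of_finset_subset_biUnion ⟨y, hy⟩ hdir
        (s := hSfin.toFinset) (by intro x hx; exact hmem x (by simpa using hx))
      have hKtop : Subgroup.closure S ≤ K := (Subgroup.closure_le K).mpr (by
        intro x hx; exact hSK (by simpa using hx))
      exact hcs hKc (le_antisymm le_top (hScl ▸ hKtop)))
    ⊥ (by
      intro h
      obtain ⟨x, hx⟩ := exists_ne (1 : G)
      exact hx (Subgroup.mem_bot.mp (h.symm ▸ Subgroup.mem_top x)))
  have hMne : M ≠ ⊤ := hM.prop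
  -- the quotient Q
  set Q := G ⧸ M with hQ
  -- every subgroup of Q is ⊥ or ⊤
  have hdich : ∀ N : Subgroup Q, N = ⊥ ∨ N = ⊤ := by
    intro N
    have hMle : M ≤ N.comap (QuotientGroup.mk' M) := by
      intro m hm
      simp only [Subgroup.mem_comap]
      have : QuotientGroup.mk' M m = 1 := (QuotientGroup.eq_one_iff m).mpr hm
      rw [this]; exact N.one_mem
    have hmapcomap : (N.comap (QuotientGroup.mk' M)).map (QuotientGroup.mk' M) = N :=
      Subgroup.map_comap_eq_self_of_surjective (QuotientGroup.mk'_surjective M) N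
    by_cases h : N.comap (QuotientGroup.mk' M) = M
    · left
      rw [← hmapcomap, h, Subgroup.map_eq_bot_iff, QuotientGroup.ker_mk']
    · right
      have : N.comap (QuotientGroup.mk' M) = ⊤ := by
        by_contra h2
        exact h (le_antisymm (hM.2 h2 hMle) hMle)
      rw [← hmapcomap, this, Subgroup.map_top_of_surjective _ (QuotientGroup.mk'_surjective M)]
  -- a nontrivial element of Q
  obtain ⟨x, hx⟩ : ∃ x, x ∉ M := by
    by_contra h; push_neg at h; exact hMne ((Subgroup.eq_top_iff' M).mpr h)
  set g : Q := QuotientGroup.mk' M x with hg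
  have hgne : g ≠ 1 := fun h => hx ((QuotientGroup.eq_one_iff x).mp h)
  have hzp : Subgroup.zpowers g = ⊤ :=
    (hdich _).resolve_left (Subgroup.zpowers_ne_bot.mpr hgne)
  have hfin : IsOfFinOrder g := by
    rcases hdich (Subgroup.zpowers (g^2)) with h | h
    · have : g^2 = 1 := Subgroup.mem_bot.mp (h ▸ Subgroup.mem_zpowers (g^2))
      exact isOfFinOrder_iff_pow_eq_one.mpr ⟨2, by norm_num, this⟩
    · have : g ∈ Subgroup.zpowers (g^2) := h ▸ Subgroup.mem_top g
      obtain ⟨k, hk⟩ := this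
      have hk' : g ^ (2*k) = g := by
        rw [zpow_mul, show (2:ℤ) = ((2:ℕ):ℤ) by norm_num, zpow_natCast]
        exact hk
      have : g ^ (2*k - 1) = 1 := by
        rw [zpow_sub, hk', zpow_one, mul_inv_cancel]
      refine isOfFinOrder_iff_zpow_eq_one.mpr ⟨2*k - 1, by omega, this⟩
  haveI : Finite Q := by
    have : (Subgroup.zpowers g : Set Q).Finite := finite_zpowers.mpr hfin
    rw [hzp] at this
    simpa using Set.finite_univ_iff.mp (by simpa using this)
  have := hq Q (QuotientGroup.mk' M)
  exact hgne (by rw [hg, this]; rfl)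

lemma no_proper_finiteIndex {H : Type} [Group H]
    (hH1 : ∀ (F : Type) [Group F] [Finite F] (f : H →* F), f = 1)
    (K : Subgroup H) (hK : K.FiniteIndex) : K = ⊤ := by
  haveI := hK
  have hf := hH1 (Equiv.Perm (H ⧸ K)) (MulAction.toPermHom H (H ⧸ K))
  rw [Subgroup.eq_top_iff']
  intro h
  have h1 : MulAction.toPermHom H (H ⧸ K) h = 1 := by rw [hf]; rfl
  have h2 : h • ((1 : H) : H ⧸ K) = ((1 : H) : H ⧸ K) := by
    have := congrArg (fun (e : Equiv.Perm (H ⧸ K)) => e ((1 : H) : H ⧸ K)) h1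
    simpa [MulAction.toPermHom] using this
  rw [MulAction.Quotient.smul_mk] at h2
  have := QuotientGroup.leftRel_apply.mp (Quotient.exact' h2)
  simpa using this

lemma commutator_eq_top_of_fg {H : Type} [Group H] (hfg : Group.FG H)
    (hH1 : ∀ (F : Type) [Group F] [Finite F] (f : H →* F), f = 1) :
    commutator H = ⊤ := by
  have hofsurj : Function.Surjective (Abelianization.of (G := H)) :=
    fun a => QuotientGroup.mk_surjective a
  haveI := hfg
  have habfg : Group.FG (Abelianization H) := Group.fg_of_surjective hofsurj
  have hsub : Subsingleton (Abelianization H) := by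
    apply subsingleton_of_fg_comm habfg
    intro F _ _ f
    have h1 := hH1 F (f.comp Abelianization.of)
    have h2 : ∀ x : H, f (Abelianization.of x) = 1 := fun x => by
      rw [show f (Abelianization.of x) = (f.comp Abelianization.of) x from rfl, h1]; rfl
    ext a
    simpa using h2 a
  rw [Subgroup.eq_top_iff']
  intro x
  have h3 : (Abelianization.of x : Abelianization H) = 1 := Subsingleton.elim _ _
  exact (QuotientGroup.eq_one_iff x).mp h3

/-- Let `L` be finitely generated, `R ◁ L` with `H = L/R` having no
nontrivial finite quotients and `H₂(H, ℤ) = 0`.  Then for every subgroup `U ≤ R` which is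
normal in `L` and of finite index in `R`, there is a finite-index subgroup `V` of `L`
with `V ∩ R ≤ U`. -/
theorem exists_finiteIndex_inf_le {L : Type} [Group L] (hfg : Group.FG L)
    (R : Subgroup L) [R.Normal]
    (hH1 : ∀ (F : Type) [Group F] [Finite F] (f : (L ⧸ R) →* F), f = 1)
    (hH2 : Subsingleton (schurMultiplier (L ⧸ R)))
    (U : Subgroup L) [U.Normal] (hUR : U ≤ R) (hfin : (U.subgroupOf R).FiniteIndex) :
    ∃ V : Subgroup L, V.FiniteIndex ∧ V ⊓ R ≤ U := by
  classical
  haveI := hfg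
  -- H = L ⧸ R is f.g. and perfect
  have hperf : commutator (L ⧸ R) = ⊤ :=
    commutator_eq_top_of_fg (Group.fg_of_surjective (QuotientGroup.mk'_surjective R)) hH1
  -- the quotient by U
  set mk : L →* L ⧸ U := QuotientGroup.mk' U with hmk
  have hmksurj : Function.Surjective mk := QuotientGroup.mk'_surjective U
  set Qb : Subgroup (L ⧸ U) := R.map mk with hQb
  haveI hQbn : Qb.Normal := Subgroup.Normal.map ‹R.Normal› mk hmksurj
  -- the map to H
  set q : (L ⧸ U) →* (L ⧸ R) := QuotientGroup.map U R (MonoidHom.id L)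
    (by simpa using hUR) with hq
  have hq_mk : ∀ x : L, q (mk x) = QuotientGroup.mk x := fun x => rfl
  have hqsurj : Function.Surjective q := by
    intro y
    obtain ⟨x, rfl⟩ := QuotientGroup.mk_surjective y
    exact ⟨mk x, rfl⟩
  have hker : q.ker = Qb := by
    ext a
    constructor
    · intro ha
      obtain ⟨x, rfl⟩ := hmksurj a
      rw [MonoidHom.mem_ker, hq_mk] at ha
      exact ⟨x, (QuotientGroup.eq_one_iff x).mp ha, rfl⟩
    · rintro ⟨r, hr, rfl⟩
      rw [MonoidHom.mem_ker, hq_mk]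
      exact (QuotientGroup.eq_one_iff r).mpr hr
  -- Qb is finite
  haveI hQbfin : Finite Qb := by
    haveI := hfin
    set f : R →* L ⧸ U := mk.comp R.subtype with hf
    have hrange : Qb = f.range := by
      ext a
      simp [hQb, hf, Subgroup.mem_map, MonoidHom.mem_range, Subtype.exists]
    have hkf : f.ker = U.subgroupOf R := by
      ext r
      rw [MonoidHom.mem_ker]
      show mk (↑r) = 1 ↔ _
      rw [hmk, QuotientGroup.mk'_apply, QuotientGroup.eq_one_iff, Subgroup.mem_subgroupOf]
    haveI : Finite (R ⧸ f.ker) := by rw [hkf]; infer_instance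
    rw [hrange]
    exact Finite.of_equiv _ (QuotientGroup.quotientKerEquivRange f).toEquiv
  -- the centralizer C has finite index
  set C : Subgroup (L ⧸ U) := Subgroup.centralizer (Qb : Set (L ⧸ U)) with hC
  haveI : Finite (MulAut Qb) :=
    Finite.of_injective (fun e => (e : Qb → Qb)) DFunLike.coe_injective
  have hkerC : (MulAut.conjNormal (H := Qb) : (L ⧸ U) →* MulAut Qb).ker ≤ C := by
    intro g hg
    rw [MonoidHom.mem_ker] at hg
    rw [hC, Subgroup.mem_centralizer_iff]
    intro h hh
    have := congrArg (fun (e : MulAut Qb) => (e ⟨h, hh⟩ : L ⧸ U)) hg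
    simp only [MulAut.conjNormal_apply] at this
    have h1 : g * h * g⁻¹ = h := this
    calc h * g = (g * h * g⁻¹) * g := by rw [h1]
      _ = g * h := by group
  haveI hCfi : C.FiniteIndex := Subgroup.finiteIndex_of_le hkerC
  -- C surjects onto H
  have hCmap : C.map q = ⊤ := by
    apply no_proper_finiteIndex hH1
    have hle : C ≤ (C.map q).comap q := Subgroup.le_comap_map q C
    haveI : ((C.map q).comap q).FiniteIndex := Subgroup.finiteIndex_of_le hle
    constructor
    rw [← Subgroup.index_comap_of_surjective _ hqsurj]
    exact Subgroup.FiniteIndex.index_ne_zero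
  -- a section of q with values in C
  have hsec : ∀ h : L ⧸ R, ∃ c, c ∈ C ∧ q c = h := by
    intro h
    have : h ∈ C.map q := hCmap ▸ Subgroup.mem_top h
    obtain ⟨c, hc, rfl⟩ := this
    exact ⟨c, hc, rfl⟩
  choose s hsC hsq using hsec
  set φ : FreeGroup (L ⧸ R) →* (L ⧸ U) := FreeGroup.lift s with hφ
  have hφof : ∀ h, φ (FreeGroup.of h) = s h := fun h => FreeGroup.lift_apply_of
  have hφC : ∀ w, φ w ∈ C := by
    intro w
    induction w using FreeGroup.induction_on with
    | C1 => exact C.one_mem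
    | of x => show φ (FreeGroup.of x) ∈ C; rw [hφof]; exact hsC x
    | inv_of x ih => rw [map_inv]; exact C.inv_mem ih
    | mul x y ihx ihy => rw [map_mul]; exact C.mul_mem ihx ihy
  have hqφ : ∀ w, q (φ w) = FreeGroup.lift (id : (L ⧸ R) → (L ⧸ R)) w := by
    have : q.comp φ = FreeGroup.lift (id : (L ⧸ R) → (L ⧸ R)) := by
      apply FreeGroup.ext_hom
      intro a
      simp [hφof, hsq]
    intro w
    rw [← this]; rfl
  -- elements of C commute with elements of Qb
  have hcomm : ∀ c ∈ C, ∀ z ∈ Qb, Commute z c := by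
    intro c hc z hz
    exact Subgroup.mem_centralizer_iff.mp hc z hz
  -- the key claim: Qb ∩ [C,C] is trivial
  have hkey : ∀ a : L ⧸ U, a ∈ Qb → a ∈ ⁅C, C⁆ → a = 1 := by
    intro a haQ haC
    -- a is the image of an element of [F,F]
    have hle : ⁅C, C⁆ ≤ (commutator (FreeGroup (L ⧸ R))).map φ := by
      rw [Subgroup.commutator_le]
      intro c hc d hd
      refine ⟨⁅FreeGroup.of (q c), FreeGroup.of (q d)⁆,
        Subgroup.commutator_mem_commutator (Subgroup.mem_top _) (Subgroup.mem_top _), ?_⟩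
      rw [map_commutatorElement, hφof, hφof]
      -- s (q c) = c * z with z ∈ Qb ∩ C, similarly for d
      have hzc : c⁻¹ * s (q c) ∈ Qb := by
        rw [← hker, MonoidHom.mem_ker, map_mul, map_inv, hsq]
        group
      have hzd : d⁻¹ * s (q d) ∈ Qb := by
        rw [← hker, MonoidHom.mem_ker, map_mul, map_inv, hsq]
        group
      have hzcC : c⁻¹ * s (q c) ∈ C := C.mul_mem (C.inv_mem hc) (hsC _)
      have h1 : s (q c) = c * (c⁻¹ * s (q c)) := by group
      have h2 : s (q d) = d * (d⁻¹ * s (q d)) := by group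
      rw [h1, h2]
      exact commutatorElement_mul_aux c d _ _
        (hcomm d hd _ hzc) (hcomm _ hzcC _ hzd).symm (hcomm c hc _ hzd)
    obtain ⟨w, hwF, hwφ⟩ := hle haC
    -- w lies in the Hopf numerator
    have hwker : w ∈ presentationKernel (L ⧸ R) := by
      rw [presentationKernel, MonoidHom.mem_ker, ← hqφ, hwφ]
      rw [← MonoidHom.mem_ker, hker]
      exact haQ
    have hwnum : w ∈ hopfNumerator (L ⧸ R) := ⟨hwker, hwF⟩
    -- by H₂ = 0, w lies in the Hopf denominator
    have hwden : w ∈ hopfDenominator (L ⧸ R) := by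
      haveI : Subsingleton ((hopfNumerator (L ⧸ R)) ⧸
        (hopfDenominator (L ⧸ R)).subgroupOf (hopfNumerator (L ⧸ R))) := hH2
      have h4 : (QuotientGroup.mk (⟨w, hwnum⟩ : hopfNumerator (L ⧸ R)) :
          schurMultiplier (L ⧸ R)) = QuotientGroup.mk (1 : hopfNumerator (L ⧸ R)) :=
        Subsingleton.elim _ _
      rw [QuotientGroup.mk_one] at h4
      have h5 := (QuotientGroup.eq_one_iff _).mp h4
      exact (Subgroup.mem_subgroupOf).mp h5
    -- but φ kills the Hopf denominator
    have hbot : (hopfDenominator (L ⧸ R)).map φ ≤ ⊥ := by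
      rw [hopfDenominator, Subgroup.map_commutator, Subgroup.commutator_le]
      rintro g1 ⟨u, -, rfl⟩ g2 ⟨v, hv, rfl⟩
      rw [Subgroup.mem_bot, commutatorElement_eq_one_iff_commute]
      have hφvQ : φ v ∈ Qb := by
        rw [← hker, MonoidHom.mem_ker, hqφ]
        exact hv
      exact (hcomm _ (hφC u) _ hφvQ).symm
    have : a ∈ (⊥ : Subgroup (L ⧸ U)) := hbot ⟨w, hwden, hwφ⟩
    exact Subgroup.mem_bot.mp this
  -- the derived subgroup D = [C,C] has finite index
  set D : Subgroup (L ⧸ U) := ⁅C, C⁆ with hD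
  have hDmap : D.map q = ⊤ := by
    rw [hD, Subgroup.map_commutator, hCmap, ← commutator_def, hperf]
  haveI hDfi : D.FiniteIndex := by
    have hsurj : Function.Surjective
        (fun z : Qb => (QuotientGroup.mk (z : L ⧸ U) : (L ⧸ U) ⧸ D)) := by
      intro gq
      obtain ⟨g, rfl⟩ := QuotientGroup.mk_surjective gq
      have : q g ∈ D.map q := hDmap ▸ Subgroup.mem_top (q g)
      obtain ⟨d, hd, hdq⟩ := this
      have hzQ : g * d⁻¹ ∈ Qb := by
        rw [← hker, MonoidHom.mem_ker, map_mul, map_inv, hdq]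
        group
      refine ⟨⟨g * d⁻¹, hzQ⟩, ?_⟩
      show (QuotientGroup.mk (g * d⁻¹) : (L ⧸ U) ⧸ D) = QuotientGroup.mk g
      rw [QuotientGroup.eq]
      simpa using hd
    haveI : Finite ((L ⧸ U) ⧸ D) := Finite.of_surjective _ hsurj
    exact Subgroup.finiteIndex_of_finite_quotient (H := D)
  -- conclusion
  refine ⟨D.comap mk, ?_, ?_⟩
  · constructor
    rw [Subgroup.index_comap_of_surjective _ hmksurj]
    exact hDfi.index_ne_zero
  · rintro x ⟨hxV, hxR⟩
    have h1 : mk x ∈ D := hxV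
    have h2 : mk x ∈ Qb := ⟨x, hxR, rfl⟩
    have h3 : mk x = 1 := hkey _ h2 h1
    exact (QuotientGroup.eq_one_iff x).mp h3
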